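/- Let λ > 1, R > 0, γ > 0 be real numbers and let p be a polynomial with real coefficients. For every ε' > 0 there exists a constant K' > 0 such that for all natural numbers t and d with d ≤ t, and for every sequence e : ℕ → ℝ with |e_k| ≤ 2 for all k, the weighted sum satisfies γ · λ^t · | Σ_{k=⌈R(t-d)⌉}^{⌊Rt⌋} λ^{-k/R} · p(⌊Rt⌋ - k) · e_k | ≤ K' · λ^{(1+ε')·d}. -/

import Mathlib

open Filter Polynomial

/-- Auxiliary: a polynomial is dominated by `K * exp(β d)` on naturals. -/
theorem poly_le_exp_aux (f : Polynomial ℝ) {β : ℝ} (hβ : 0 < β) :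
    ∃ K > (0:ℝ), ∀ d : ℕ, f.eval (d:ℝ) ≤ K * Real.exp (β * d) := by
  set g := f.comp (Polynomial.C β⁻¹ * Polynomial.X) with hg
  have htend : Tendsto (fun d : ℕ => f.eval (d:ℝ) / Real.exp (β * d)) atTop (nhds 0) := by
    have h1 : Tendsto (fun d : ℕ => β * (d:ℝ)) atTop atTop :=
      (tendsto_natCast_atTop_atTop (R := ℝ)).const_mul_atTop hβ
    have h2 := (g.tendsto_div_exp_atTop).comp h1
    convert h2 using 2 with d
    simp [hg, Polynomial.eval_comp, Function.comp]
    rw [inv_mul_cancel_left₀ hβ.ne']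
  obtain ⟨M, hM⟩ := htend.isBoundedUnder_le.bddAbove_range
  refine ⟨max M 1, lt_of_lt_of_le one_pos (le_max_right _ _), fun d => ?_⟩
  have hMd : f.eval (d:ℝ) / Real.exp (β * d) ≤ M := hM (Set.mem_range_self d)
  have hexp : (0:ℝ) < Real.exp (β * d) := Real.exp_pos _
  calc f.eval (d:ℝ) = (f.eval (d:ℝ) / Real.exp (β * d)) * Real.exp (β * d) := by
        field_simp
    _ ≤ max M 1 * Real.exp (β * d) :=
        mul_le_mul_of_nonneg_right (hMd.trans (le_max_left _ _)) hexp.le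

/-- Majorant polynomial with absolute-value coefficients. -/
noncomputable def absPoly (p : Polynomial ℝ) : Polynomial ℝ :=
  ∑ i ∈ Finset.range (p.natDegree + 1), Polynomial.C |p.coeff i| * Polynomial.X ^ i

theorem absPoly_eval (p : Polynomial ℝ) (x : ℝ) :
    (absPoly p).eval x = ∑ i ∈ Finset.range (p.natDegree + 1), |p.coeff i| * x ^ i := by
  simp [absPoly, Polynomial.eval_finset_sum]

theorem abs_eval_le_absPoly (p : Polynomial ℝ) (x : ℝ) :
    |p.eval x| ≤ (absPoly p).eval |x| := by
  rw [absPoly_eval, p.eval_eq_sum_range]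
  refine (Finset.abs_sum_le_sum_abs _ _).trans (le_of_eq ?_)
  exact Finset.sum_congr rfl fun i _ => by rw [abs_mul, abs_pow]

theorem absPoly_mono (p : Polynomial ℝ) {x y : ℝ} (hx : 0 ≤ x) (hxy : x ≤ y) :
    (absPoly p).eval x ≤ (absPoly p).eval y := by
  rw [absPoly_eval, absPoly_eval]
  exact Finset.sum_le_sum fun i _ =>
    mul_le_mul_of_nonneg_left (pow_le_pow_left₀ hx hxy i) (abs_nonneg _)

/-- Error-propagation bound (Lemma 5.1): a weighted sum of error terms of magnitude
at most 2, with weights `γ λ^t λ^{-k/R} p(⌊Rt⌋-k)` over bit indices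
`⌈R(t-d)⌉ ≤ k ≤ ⌊Rt⌋`, is bounded by `K' λ^{(1+ε')d}`. -/
theorem error_propagation_bound (lam R gamma : ℝ) (hlam : 1 < lam) (hR : 0 < R)
    (hgamma : 0 < gamma) (p : Polynomial ℝ) :
    ∀ ε' > (0 : ℝ), ∃ K' > (0 : ℝ), ∀ t d : ℕ, d ≤ t →
      ∀ e : ℕ → ℝ, (∀ k, |e k| ≤ 2) →
        gamma * lam ^ t *
          |∑ k ∈ Finset.Icc ⌈R * ((t : ℝ) - (d : ℝ))⌉ ⌊R * (t : ℝ)⌋,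
            lam ^ (-(k : ℝ) / R) *
              Polynomial.eval ((⌊R * (t : ℝ)⌋ : ℝ) - (k : ℝ)) p * e k.toNat|
          ≤ K' * lam ^ ((1 + ε') * (d : ℝ)) := by
  intro ε' hε'
  have hlam0 : (0:ℝ) < lam := lt_trans one_pos hlam
  have hlog : 0 < Real.log lam := Real.log_pos hlam
  set β := ε' * Real.log lam with hβdef
  have hβ : 0 < β := mul_pos hε' hlog
  set q := absPoly p with hq
  set F : Polynomial ℝ := Polynomial.C (2*gamma) * (Polynomial.C R * Polynomial.X + 1) *
      q.comp (Polynomial.C R * Polynomial.X) with hF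
  obtain ⟨K, hK, hKb⟩ := poly_le_exp_aux F hβ
  refine ⟨K, hK, fun t d hdt e he => ?_⟩
  set a := ⌈R * ((t:ℝ) - (d:ℝ))⌉ with ha
  set b := ⌊R * (t:ℝ)⌋ with hb
  have hafl : R * ((t:ℝ) - (d:ℝ)) ≤ (a:ℝ) := Int.le_ceil _
  have hbfl : (b:ℝ) ≤ R * t := Int.floor_le _
  have hd0 : (0:ℝ) ≤ R * (d:ℝ) := by positivity
  have hba : (b:ℝ) - (a:ℝ) ≤ R * d := by nlinarith [hafl, hbfl]
  have hqd0 : 0 ≤ q.eval (R*(d:ℝ)) := by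
    have h1 := abs_eval_le_absPoly p (R*(d:ℝ))
    rw [abs_of_nonneg hd0] at h1
    exact (abs_nonneg _).trans h1
  -- termwise bound
  have hterm : ∀ k ∈ Finset.Icc a b,
      |lam ^ (-(k:ℝ)/R) * Polynomial.eval ((b:ℝ) - (k:ℝ)) p * e k.toNat|
        ≤ lam ^ ((d:ℝ) - (t:ℝ)) * (q.eval (R*(d:ℝ)) * 2) := by
    intro k hk
    obtain ⟨hak, hkb⟩ := Finset.mem_Icc.mp hk
    have hak' : (a:ℝ) ≤ (k:ℝ) := by exact_mod_cast hak
    have hkb' : (k:ℝ) ≤ (b:ℝ) := by exact_mod_cast hkb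
    have hpos : (0:ℝ) < lam ^ (-(k:ℝ)/R) := Real.rpow_pos_of_pos hlam0 _
    have h1 : lam ^ (-(k:ℝ)/R) ≤ lam ^ ((d:ℝ) - (t:ℝ)) := by
      apply (Real.rpow_le_rpow_left_iff hlam).mpr
      rw [div_le_iff₀ hR]
      nlinarith [hafl, hak']
    have h2 : |Polynomial.eval ((b:ℝ) - (k:ℝ)) p| ≤ q.eval (R*(d:ℝ)) := by
      have hbk : (0:ℝ) ≤ (b:ℝ) - (k:ℝ) := by linarith
      have hbk2 : (b:ℝ) - (k:ℝ) ≤ R*(d:ℝ) := by linarith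
      have h3 := abs_eval_le_absPoly p ((b:ℝ) - (k:ℝ))
      rw [abs_of_nonneg hbk] at h3
      exact h3.trans (absPoly_mono p hbk hbk2)
    calc |lam ^ (-(k:ℝ)/R) * Polynomial.eval ((b:ℝ) - (k:ℝ)) p * e k.toNat|
        = lam ^ (-(k:ℝ)/R) * |Polynomial.eval ((b:ℝ) - (k:ℝ)) p| * |e k.toNat| := by
          rw [abs_mul, abs_mul, abs_of_pos hpos]
      _ ≤ lam ^ ((d:ℝ) - (t:ℝ)) * q.eval (R*(d:ℝ)) * 2 := by
          apply mul_le_mul _ (he _) (abs_nonneg _)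
          · positivity
          · exact mul_le_mul h1 h2 (abs_nonneg _) (Real.rpow_pos_of_pos hlam0 _).le
      _ = lam ^ ((d:ℝ) - (t:ℝ)) * (q.eval (R*(d:ℝ)) * 2) := by ring
  have hsum : |∑ k ∈ Finset.Icc a b,
      lam ^ (-(k:ℝ)/R) * Polynomial.eval ((b:ℝ) - (k:ℝ)) p * e k.toNat|
        ≤ ((Finset.Icc a b).card : ℝ) * (lam ^ ((d:ℝ) - (t:ℝ)) * (q.eval (R*(d:ℝ)) * 2)) := by
    refine (Finset.abs_sum_le_sum_abs _ _).trans ((Finset.sum_le_sum hterm).trans_eq ?_)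
    rw [Finset.sum_const, nsmul_eq_mul]
  have hcard : ((Finset.Icc a b).card : ℝ) ≤ R*(d:ℝ) + 1 := by
    rw [Int.card_Icc]
    rcases le_or_gt (b + 1 - a) 0 with h | h
    · rw [Int.toNat_of_nonpos h]; push_cast; linarith
    · have : ((b + 1 - a).toNat : ℝ) = ((b:ℝ) + 1 - a) := by
        rw [← Int.cast_natCast, Int.toNat_of_nonneg h.le]; push_cast; ring
      rw [this]; linarith
  have hrpos : (0:ℝ) < lam ^ ((d:ℝ) - (t:ℝ)) := Real.rpow_pos_of_pos hlam0 _
  have key : gamma * lam ^ t *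
      |∑ k ∈ Finset.Icc a b,
        lam ^ (-(k:ℝ)/R) * Polynomial.eval ((b:ℝ) - (k:ℝ)) p * e k.toNat|
      ≤ gamma * lam ^ t * ((R*(d:ℝ) + 1) * (lam ^ ((d:ℝ) - (t:ℝ)) * (q.eval (R*(d:ℝ)) * 2))) := by
    apply mul_le_mul_of_nonneg_left _ (by positivity)
    exact hsum.trans (mul_le_mul_of_nonneg_right hcard (by positivity))
  have hFeval : F.eval (d:ℝ) = 2*gamma*((R*(d:ℝ)+1) * q.eval (R*(d:ℝ))) := by
    simp [hF, Polynomial.eval_comp]; ring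
  have hpow : lam ^ t * lam ^ ((d:ℝ) - (t:ℝ)) = lam ^ ((d:ℝ)) := by
    rw [← Real.rpow_natCast lam t, ← Real.rpow_add hlam0]; ring_nf
  have heq : gamma * lam ^ t * ((R*(d:ℝ) + 1) * (lam ^ ((d:ℝ) - (t:ℝ)) * (q.eval (R*(d:ℝ)) * 2)))
      = lam ^ ((d:ℝ)) * F.eval (d:ℝ) := by
    rw [hFeval, ← hpow]; ring
  have hdpos : (0:ℝ) < lam ^ ((d:ℝ)) := Real.rpow_pos_of_pos hlam0 _
  have hfinal : lam ^ ((d:ℝ)) * F.eval (d:ℝ) ≤ lam ^ ((d:ℝ)) * (K * Real.exp (β * d)) :=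
    mul_le_mul_of_nonneg_left (hKb d) hdpos.le
  have hrw : K * lam ^ ((1 + ε') * (d:ℝ)) = lam ^ ((d:ℝ)) * (K * Real.exp (β * d)) := by
    rw [show (1 + ε') * (d:ℝ) = (d:ℝ) + ε' * d by ring, Real.rpow_add hlam0,
      Real.rpow_def_of_pos hlam0 (ε' * d), hβdef]
    ring_nf
  rw [hrw]
  calc gamma * lam ^ t *
      |∑ k ∈ Finset.Icc a b,
        lam ^ (-(k:ℝ)/R) * Polynomial.eval ((b:ℝ) - (k:ℝ)) p * e k.toNat|
      ≤ gamma * lam ^ t * ((R*(d:ℝ) + 1) * (lam ^ ((d:ℝ) - (t:ℝ)) * (q.eval (R*(d:ℝ)) * 2))) := key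
    _ = lam ^ ((d:ℝ)) * F.eval (d:ℝ) := heq
    _ ≤ lam ^ ((d:ℝ)) * (K * Real.exp (β * d)) := hfinal
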